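/- Let α > 0 and β > 0, and define F : (S × A → ℝ) → ℝ by F(A) = log ( Σ_s (Σ_a exp(A(s,a)/α))^{α/β} ). Then: (i) for any A₁, A₂ : S × A → ℝ such that A₁ − A₂ is not a constant function, F((A₁ + A₂)/2) < (F(A₁) + F(A₂))/2 (strict convexity off the diagonal direction); and (ii) for every A : S × A → ℝ and every c ∈ ℝ, F(A + c·𝟙) = F(A) + c/β, where 𝟙 is the constant function 1 (affine with slope 1/β along the diagonal direction). -/

import Mathlib

open Finset

private lemma cs_le {ι : Type} [Fintype ι] (u v : ι → ℝ) :
    ∑ i, u i * v i ≤ Real.sqrt (∑ i, u i ^ 2) * Real.sqrt (∑ i, v i ^ 2) := by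
  have h := @real_inner_le_norm (EuclideanSpace ℝ ι) _ _
    ((EuclideanSpace.equiv ι ℝ).symm u) ((EuclideanSpace.equiv ι ℝ).symm v)
  simpa [EuclideanSpace.norm_eq, PiLp.inner_apply, RCLike.inner_apply, sq_abs,
    mul_comm] using h

private lemma cs_strict {ι : Type} [Fintype ι] (u v : ι → ℝ)
    (hv : ∀ i, 0 < v i) (h : ¬ ∃ k : ℝ, ∀ i, u i = k * v i) :
    ∑ i, u i * v i < Real.sqrt (∑ i, u i ^ 2) * Real.sqrt (∑ i, v i ^ 2) := by
  set x := (EuclideanSpace.equiv ι ℝ).symm u with hx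
  set y := (EuclideanSpace.equiv ι ℝ).symm v with hy
  have hinner : (inner ℝ x y : ℝ) = ∑ i, u i * v i := by
    simp [hx, hy, PiLp.inner_apply, RCLike.inner_apply, mul_comm]
  have hnx : ‖x‖ = Real.sqrt (∑ i, u i ^ 2) := by
    simp [hx, EuclideanSpace.norm_eq, sq_abs]
  have hny : ‖y‖ = Real.sqrt (∑ i, v i ^ 2) := by
    simp [hy, EuclideanSpace.norm_eq, sq_abs]
  have hle := real_inner_le_norm x y
  rcases lt_or_eq_of_le hle with hlt | heq
  · rw [← hinner, ← hnx, ← hny]; exact hlt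
  · exfalso
    rw [inner_eq_norm_mul_iff_real] at heq
    by_cases hιne : Nonempty ι
    · obtain ⟨i0⟩ := hιne
      have hny0 : 0 < ‖y‖ := by
        rw [hny]
        apply Real.sqrt_pos.2
        exact Finset.sum_pos (fun i _ => pow_pos (hv i) 2) ⟨i0, mem_univ i0⟩
      refine h ⟨‖x‖ / ‖y‖, fun i => ?_⟩
      have h2 : ‖y‖ * u i = ‖x‖ * v i := by
        have := congrArg (fun z : EuclideanSpace ℝ ι => z i) heq
        simpa [hx, hy] using this
      field_simp
      linarith
    · exact h ⟨0, fun i => absurd ⟨i⟩ hιne⟩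

/-- `F(B) = log ( Σ_s (Σ_a exp(B(s,a)/α))^{α/β} )`. -/
noncomputable def Fdual {S A : Type} [Fintype S] [Fintype A]
    (α β : ℝ) (B : S × A → ℝ) : ℝ :=
  Real.log (∑ s, (∑ a, Real.exp (B (s, a) / α)) ^ (α / β))

/-- for `α > 0`, `β > 0`:
(i) `F` is strictly midpoint-convex in any direction off the diagonal, and
(ii) `F` is affine with slope `1/β` along the diagonal direction. -/
theorem Fdual_strictConvex_offDiagonal_and_affine_diagonal
    {S A : Type} [Fintype S] [Fintype A] [Nonempty S] [Nonempty A]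
    (α β : ℝ) (hα : 0 < α) (hβ : 0 < β) :
    (∀ B₁ B₂ : S × A → ℝ, (¬ ∃ c : ℝ, ∀ x : S × A, B₁ x - B₂ x = c) →
      Fdual α β (fun x => (B₁ x + B₂ x) / 2)
        < (Fdual α β B₁ + Fdual α β B₂) / 2) ∧
    (∀ (B : S × A → ℝ) (c : ℝ),
      Fdual α β (fun x => B x + c) = Fdual α β B + c / β) := by
  have hα' : α ≠ 0 := hα.ne'
  have hβ' : β ≠ 0 := hβ.ne'
  have hαβ : 0 < α / β := div_pos hα hβ
  constructor
  · intro B₁ B₂ hne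
    set p : S → ℝ := fun s => ∑ a, Real.exp (B₁ (s, a) / α) with hp_def
    set q : S → ℝ := fun s => ∑ a, Real.exp (B₂ (s, a) / α) with hq_def
    set m : S → ℝ := fun s => ∑ a, Real.exp ((B₁ (s, a) + B₂ (s, a)) / 2 / α) with hm_def
    have hppos : ∀ s, 0 < p s := fun s =>
      Finset.sum_pos (fun a _ => Real.exp_pos _) univ_nonempty
    have hqpos : ∀ s, 0 < q s := fun s =>
      Finset.sum_pos (fun a _ => Real.exp_pos _) univ_nonempty
    have hmpos : ∀ s, 0 < m s := fun s =>
      Finset.sum_pos (fun a _ => Real.exp_pos _) univ_nonempty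
    have hsplit : ∀ s, m s = ∑ a, Real.exp (B₁ (s, a) / (2 * α)) * Real.exp (B₂ (s, a) / (2 * α)) := by
      intro s
      refine Finset.sum_congr rfl fun a _ => ?_
      rw [← Real.exp_add]
      congr 1
      field_simp
    have hpsum : ∀ s, p s = ∑ a, Real.exp (B₁ (s, a) / (2 * α)) ^ 2 := by
      intro s
      refine Finset.sum_congr rfl fun a _ => ?_
      rw [sq, ← Real.exp_add]
      congr 1
      field_simp
      ring
    have hqsum : ∀ s, q s = ∑ a, Real.exp (B₂ (s, a) / (2 * α)) ^ 2 := by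
      intro s
      refine Finset.sum_congr rfl fun a _ => ?_
      rw [sq, ← Real.exp_add]
      congr 1
      field_simp
      ring
    have hm_le : ∀ s, m s ≤ Real.sqrt (p s) * Real.sqrt (q s) := by
      intro s
      rw [hsplit s, hpsum s, hqsum s]
      exact cs_le _ _
    set e : ℝ := α / (2 * β) with he_def
    have hepos : 0 < e := div_pos hα (by linarith)
    have key : ∀ s, (Real.sqrt (p s) * Real.sqrt (q s)) ^ (α / β) = p s ^ e * q s ^ e := by
      intro s
      rw [Real.mul_rpow (Real.sqrt_nonneg _) (Real.sqrt_nonneg _),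
        Real.sqrt_eq_rpow, Real.sqrt_eq_rpow,
        ← Real.rpow_mul (hppos s).le, ← Real.rpow_mul (hqpos s).le]
      have : 1 / 2 * (α / β) = e := by rw [he_def]; ring
      rw [this]
    have hstep2 : ∀ s, m s ^ (α / β) ≤ p s ^ e * q s ^ e := by
      intro s
      rw [← key s]
      exact Real.rpow_le_rpow (hmpos s).le (hm_le s) hαβ.le
    have hsqp : ∀ s, (p s ^ e) ^ 2 = p s ^ (α / β) := by
      intro s
      rw [← Real.rpow_natCast (p s ^ e) 2, ← Real.rpow_mul (hppos s).le]
      congr 1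
      push_cast
      rw [he_def]; ring
    have hsqq : ∀ s, (q s ^ e) ^ 2 = q s ^ (α / β) := by
      intro s
      rw [← Real.rpow_natCast (q s ^ e) 2, ← Real.rpow_mul (hqpos s).le]
      congr 1
      push_cast
      rw [he_def]; ring
    set X : ℝ := ∑ s, p s ^ (α / β) with hX_def
    set Y : ℝ := ∑ s, q s ^ (α / β) with hY_def
    have hXpos : 0 < X :=
      Finset.sum_pos (fun s _ => Real.rpow_pos_of_pos (hppos s) _) univ_nonempty
    have hYpos : 0 < Y :=
      Finset.sum_pos (fun s _ => Real.rpow_pos_of_pos (hqpos s) _) univ_nonempty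
    have houter_le : ∑ s, p s ^ e * q s ^ e ≤ Real.sqrt X * Real.sqrt Y := by
      have h := cs_le (fun s => p s ^ e) (fun s => q s ^ e)
      simpa only [hsqp, hsqq, ← hX_def, ← hY_def] using h
    have main : ∑ s, m s ^ (α / β) < Real.sqrt X * Real.sqrt Y := by
      by_cases hcase : ∀ s, ∃ c : ℝ, ∀ a, B₁ (s, a) - B₂ (s, a) = c
      · -- row-wise constant, but constants differ across rows
        choose c hc using hcase
        have hpq : ∀ s, p s = Real.exp (c s / α) * q s := by
          intro s
          rw [hp_def, hq_def]
          simp only [Finset.mul_sum]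
          refine Finset.sum_congr rfl fun a _ => ?_
          rw [← Real.exp_add]
          congr 1
          have h1 : B₁ (s, a) = B₂ (s, a) + c s := by linarith [hc s a]
          rw [h1]
          field_simp
          ring
        have hcnc : ¬ ∃ k : ℝ, ∀ s, c s = k := by
          rintro ⟨k, hk⟩
          exact hne ⟨k, fun x => by rw [← hk x.1]; simpa using hc x.1 x.2⟩
        have hstrict : ∑ s, p s ^ e * q s ^ e < Real.sqrt (∑ s, (p s ^ e) ^ 2) * Real.sqrt (∑ s, (q s ^ e) ^ 2) := by
          refine cs_strict _ _ (fun s => Real.rpow_pos_of_pos (hqpos s) _) ?_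
          rintro ⟨k, hk⟩
          apply hcnc
          have hk0 : 0 < k := by
            obtain ⟨s0⟩ := (inferInstance : Nonempty S)
            have := hk s0
            have hps := Real.rpow_pos_of_pos (hppos s0) e
            have hqs := Real.rpow_pos_of_pos (hqpos s0) e
            nlinarith
          refine ⟨Real.log k / e * α, fun s => ?_⟩
          have h1 : p s ^ e = Real.exp (c s / α * e) * q s ^ e := by
            rw [hpq s, Real.mul_rpow (Real.exp_pos _).le (hqpos s).le, Real.exp_mul]
          have h2 := hk s
          rw [h1] at h2
          have hq0 : q s ^ e ≠ 0 := (Real.rpow_pos_of_pos (hqpos s) _).ne'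
          have h3 : Real.exp (c s / α * e) = k := mul_right_cancel₀ hq0 h2
          have h4 : c s / α * e = Real.log k := by
            rw [← h3, Real.log_exp]
          field_simp at h4 ⊢
          linarith
        calc ∑ s, m s ^ (α / β) ≤ ∑ s, p s ^ e * q s ^ e :=
              Finset.sum_le_sum fun s _ => hstep2 s
          _ < Real.sqrt X * Real.sqrt Y := by
              simpa only [hsqp, hsqq, ← hX_def, ← hY_def] using hstrict
      · -- some row on which B₁ - B₂ is not constant
        push_neg at hcase
        obtain ⟨s₀, hs₀⟩ := hcase
        have hm0 : m s₀ < Real.sqrt (p s₀) * Real.sqrt (q s₀) := by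
          rw [hsplit s₀, hpsum s₀, hqsum s₀]
          refine cs_strict _ _ (fun a => Real.exp_pos _) ?_
          rintro ⟨k, hk⟩
          obtain ⟨a₀, ha₀⟩ := hs₀ (2 * α * Real.log k)
          apply ha₀
          have hk0 : 0 < k := by
            have := hk (Classical.arbitrary A)
            have h1 := Real.exp_pos (B₁ (s₀, Classical.arbitrary A) / (2 * α))
            have h2 := Real.exp_pos (B₂ (s₀, Classical.arbitrary A) / (2 * α))
            nlinarith
          have h1 := hk a₀
          rw [← Real.exp_log hk0, ← Real.exp_add] at h1
          have h2 := Real.exp_injective h1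
          field_simp at h2 ⊢
          linarith
        have hlt0 : m s₀ ^ (α / β) < p s₀ ^ e * q s₀ ^ e := by
          rw [← key s₀]
          exact Real.rpow_lt_rpow (hmpos s₀).le hm0 hαβ
        calc ∑ s, m s ^ (α / β) < ∑ s, p s ^ e * q s ^ e :=
              Finset.sum_lt_sum (fun s _ => hstep2 s) ⟨s₀, mem_univ _, hlt0⟩
          _ ≤ Real.sqrt X * Real.sqrt Y := houter_le
    have hMpos : 0 < ∑ s, m s ^ (α / β) :=
      Finset.sum_pos (fun s _ => Real.rpow_pos_of_pos (hmpos s) _) univ_nonempty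
    have hlog := Real.log_lt_log hMpos main
    rw [Real.log_mul (Real.sqrt_pos.2 hXpos).ne' (Real.sqrt_pos.2 hYpos).ne',
      Real.log_sqrt hXpos.le, Real.log_sqrt hYpos.le] at hlog
    simp only [Fdual]
    linarith
  · intro B c
    simp only [Fdual]
    have hrow : ∀ s : S, ∑ a, Real.exp ((B (s, a) + c) / α) =
        Real.exp (c / α) * ∑ a, Real.exp (B (s, a) / α) := by
      intro s
      rw [Finset.mul_sum]
      refine Finset.sum_congr rfl fun a _ => ?_
      rw [← Real.exp_add]
      congr 1
      field_simp
      ring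
    have hsum : ∀ s : S, (∑ a, Real.exp ((B (s, a) + c) / α)) ^ (α / β) =
        Real.exp (c / β) * (∑ a, Real.exp (B (s, a) / α)) ^ (α / β) := by
      intro s
      rw [hrow s, Real.mul_rpow (Real.exp_pos _).le
        (Finset.sum_nonneg fun a _ => (Real.exp_pos _).le), ← Real.exp_mul]
      congr 2
      field_simp
    simp only [hsum, ← Finset.mul_sum]
    rw [Real.log_mul (Real.exp_pos _).ne'
      (Finset.sum_pos (fun s _ => Real.rpow_pos_of_pos
        (Finset.sum_pos (fun a _ => Real.exp_pos _) univ_nonempty) _) univ_nonempty).ne',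
      Real.log_exp]
    ring
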